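/- Let S be a Cu-semigroup and let x, y be full elements of S with x ≤ y. Assume that F_y(S) ≠ ∅. Then (1/ρ(x,y))·rc(S,y) ≤ rc(S,x). If moreover ρ(y,x) < ∞, then in addition rc(S,x) ≤ ρ(y,x)·rc(S,y) (with the convention γ·∞ = ∞ for γ ∈ (0,∞)). -/

import Mathlib

open scoped ENNReal

/-- `x' ≪ x`: for every increasing sequence whose supremum is `≥ x`,
some term of the sequence dominates `x'`. -/
def CuWayBelow {S : Type*} [Preorder S] (x' x : S) : Prop :=
  ∀ f : ℕ → S, Monotone f → ∀ s : S, IsLUB (Set.range f) s → x ≤ s → ∃ n, x' ≤ f n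

/-- A `Cu`-semigroup: a partially ordered abelian monoid whose least element is `0`,
satisfying the axioms (O1)–(O4). -/
class CuSemigroup (S : Type*) extends AddCommMonoid S, PartialOrder S, IsOrderedAddMonoid S where
  zero_le : ∀ x : S, 0 ≤ x
  O1 : ∀ f : ℕ → S, Monotone f → ∃ s : S, IsLUB (Set.range f) s
  O2 : ∀ x : S, ∃ f : ℕ → S, (∀ n, CuWayBelow (f n) (f (n + 1))) ∧ IsLUB (Set.range f) x
  O3 : ∀ {x' x y' y : S}, CuWayBelow x' x → CuWayBelow y' y → CuWayBelow (x' + y') (x + y)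
  O4 : ∀ f g : ℕ → S, Monotone f → Monotone g → ∀ a b : S,
      IsLUB (Set.range f) a → IsLUB (Set.range g) b →
      IsLUB (Set.range fun n => f n + g n) (a + b)

/-- A functional on a `Cu`-semigroup: a map `S → [0,∞]` which is additive, order
preserving, sends `0` to `0`, and preserves suprema of increasing sequences. -/
structure IsCuFunctional {S : Type*} [CuSemigroup S] (Λ : S → ℝ≥0∞) : Prop where
  map_zero : Λ 0 = 0
  map_add : ∀ x y : S, Λ (x + y) = Λ x + Λ y
  mono : Monotone Λ
  map_sup : ∀ f : ℕ → S, Monotone f → ∀ s : S, IsLUB (Set.range f) s → Λ s = ⨆ n, Λ (f n)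

/-- `x` is full if `∞ · x = sup_n (n • x)` is the largest element of `S`. -/
def IsFull {S : Type*} [CuSemigroup S] (x : S) : Prop :=
  ∀ s : S, IsLUB (Set.range fun n : ℕ => n • x) s → ∀ y : S, y ≤ s

/-- `F_w(S) ≠ ∅`: there exists a functional normalized at `w`. -/
def FNormNonempty {S : Type*} [CuSemigroup S] (w : S) : Prop :=
  ∃ Λ : S → ℝ≥0∞, IsCuFunctional Λ ∧ Λ w = 1

/-- The rank ratio `ρ(x, y)`: the infimum of all `r ∈ (0,∞)` with
`λ(x) ≤ r·λ(y)` for every functional `λ`; `∞` if there is no such `r`. -/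
noncomputable def rankRatio {S : Type*} [CuSemigroup S] (x y : S) : ℝ≥0∞ :=
  sInf {r : ℝ≥0∞ | 0 < r ∧ r ≠ ⊤ ∧ ∀ Λ : S → ℝ≥0∞, IsCuFunctional Λ → Λ x ≤ r * Λ y}

/-- `S` has `r`-comparison relative to `w`. -/
def HasRComparison {S : Type*} [CuSemigroup S] (r : ℝ≥0∞) (w : S) : Prop :=
  ∀ x y : S, (∀ Λ : S → ℝ≥0∞, IsCuFunctional Λ → Λ x + r * Λ w ≤ Λ y) → x ≤ y

/-- The radius of comparison of `S` relative to `w`: the infimum of all `r ∈ (0,∞)`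
for which `S` has `r`-comparison relative to `w`; `∞` if there is no such `r`. -/
noncomputable def rc {S : Type*} [CuSemigroup S] (w : S) : ℝ≥0∞ :=
  sInf {r : ℝ≥0∞ | 0 < r ∧ r ≠ ⊤ ∧ HasRComparison r w}

section Aux

variable {S : Type*} [CuSemigroup S]

lemma smul_mono' (x : S) : Monotone fun n : ℕ => n • x := by
  apply monotone_nat_of_le_succ
  intro n
  simp only [succ_nsmul]
  exact le_add_of_nonneg_right (CuSemigroup.zero_le x)

lemma fn_smul {Λ : S → ℝ≥0∞} (hΛ : IsCuFunctional Λ) (x : S) (n : ℕ) :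
    Λ (n • x) = n * Λ x := by
  induction n with
  | zero => simp [hΛ.map_zero]
  | succ n ih =>
    rw [succ_nsmul, hΛ.map_add, ih]
    push_cast
    ring

/-- A functional normalized somewhere is nonzero on any full element. -/
lemma full_fn_ne_zero {Λ : S → ℝ≥0∞} (hΛ : IsCuFunctional Λ) {x w : S}
    (hx : IsFull x) (hw : Λ w = 1) : Λ x ≠ 0 := by
  intro h0
  obtain ⟨s, hs⟩ := CuSemigroup.O1 (fun n : ℕ => n • x) (smul_mono' x)
  have hws : w ≤ s := hx s hs w
  have hΛs : Λ s = 0 := by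
    rw [hΛ.map_sup _ (smul_mono' x) s hs]
    simp [fn_smul hΛ, h0]
  have : (1 : ℝ≥0∞) ≤ 0 := by
    rw [← hw, ← hΛs]; exact hΛ.mono hws
  simp at this

/-- The key property of the rank ratio: `Λ x ≤ ρ(x,y) · Λ y` for every functional,
assuming `ρ(x,y) ≠ 0` and that `Λ y = 0` forces `Λ x = 0`. -/
lemma rank_spec {x y : S} (hR0 : rankRatio x y ≠ 0)
    (h0 : ∀ Λ : S → ℝ≥0∞, IsCuFunctional Λ → Λ y = 0 → Λ x = 0)
    (Λ : S → ℝ≥0∞) (hΛ : IsCuFunctional Λ) :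
    Λ x ≤ rankRatio x y * Λ y := by
  rcases eq_or_ne (Λ y) 0 with hy0 | hy0
  · rw [h0 Λ hΛ hy0]; exact zero_le
  rcases eq_or_ne (Λ y) ⊤ with hyt | hyt
  · rw [hyt, ENNReal.mul_top hR0]; exact le_top
  have h1 : Λ x / Λ y ≤ rankRatio x y := by
    apply le_sInf
    rintro r ⟨-, -, hr⟩
    rw [ENNReal.div_le_iff hy0 hyt]
    exact hr Λ hΛ
  calc Λ x = Λ x / Λ y * Λ y := (ENNReal.div_mul_cancel hy0 hyt).symm
  _ ≤ rankRatio x y * Λ y := by gcongr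

/-- If `Λ w ≤ c · Λ w'` for all functionals, with `c ∈ (0,∞)`, then
`rc w' ≤ c · rc w`. -/
lemma rc_le_mul {w w' : S} {c : ℝ≥0∞} (hc0 : c ≠ 0) (hct : c ≠ ⊤)
    (h : ∀ Λ : S → ℝ≥0∞, IsCuFunctional Λ → Λ w ≤ c * Λ w') :
    rc w' ≤ c * rc w := by
  have key : c⁻¹ * rc w' ≤ rc w := by
    apply le_sInf
    rintro r ⟨hr0, hrt, hr⟩
    have hmem : rc w' ≤ c * r := by
      apply sInf_le
      refine ⟨ENNReal.mul_pos hc0 hr0.ne', ENNReal.mul_ne_top hct hrt, ?_⟩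
      intro a b hab
      apply hr
      intro Λ hΛ
      refine le_trans (add_le_add_right ?_ (Λ a)) (hab Λ hΛ)
      calc r * Λ w ≤ r * (c * Λ w') := by gcongr; exact h Λ hΛ
      _ = c * r * Λ w' := by ring
    calc c⁻¹ * rc w' ≤ c⁻¹ * (c * r) := by gcongr
    _ = r := by rw [← mul_assoc, ENNReal.inv_mul_cancel hc0 hct, one_mul]
  calc rc w' = c * (c⁻¹ * rc w') := by
        rw [← mul_assoc, ENNReal.mul_inv_cancel hc0 hct, one_mul]
  _ ≤ c * rc w := by gcongr

end Aux

/-- Theorem (Rkrc): for full `x ≤ y` with `F_y(S) ≠ ∅`,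
`(1/ρ(x,y)) · rc(S,y) ≤ rc(S,x)`, and if moreover `ρ(y,x) < ∞` then also
`rc(S,x) ≤ ρ(y,x) · rc(S,y)`. -/
theorem stmt0 {S : Type*} [CuSemigroup S] (x y : S)
    (hx : IsFull x) (hy : IsFull y) (hxy : x ≤ y) (hFy : FNormNonempty y) :
    (rankRatio x y)⁻¹ * rc y ≤ rc x ∧
      (rankRatio y x ≠ ⊤ → rc x ≤ rankRatio y x * rc y) := by
  obtain ⟨Λ₀, hΛ₀, hΛ₀y⟩ := hFy
  have hx0 : Λ₀ x ≠ 0 := full_fn_ne_zero hΛ₀ hx hΛ₀y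
  set ρ := rankRatio x y with hρdef
  have hρ1 : ρ ≤ 1 := by
    apply sInf_le
    exact ⟨one_pos, ENNReal.one_ne_top, fun Λ hΛ => by simpa using hΛ.mono hxy⟩
  have hlow : Λ₀ x ≤ ρ := by
    apply le_sInf
    rintro r ⟨-, -, hr⟩
    simpa [hΛ₀y] using hr Λ₀ hΛ₀
  have hρ0 : ρ ≠ 0 := by
    intro h
    exact hx0 (le_antisymm (h ▸ hlow) (zero_le))
  have hρt : ρ ≠ ⊤ := ne_top_of_le_ne_top ENNReal.one_ne_top hρ1
  have specA : ∀ Λ : S → ℝ≥0∞, IsCuFunctional Λ → Λ x ≤ ρ * Λ y :=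
    rank_spec hρ0 (fun Λ hΛ h => le_antisymm (h ▸ hΛ.mono hxy) (zero_le))
  constructor
  · have h1 : rc y ≤ ρ * rc x := rc_le_mul hρ0 hρt specA
    calc ρ⁻¹ * rc y ≤ ρ⁻¹ * (ρ * rc x) := by gcongr
    _ = rc x := by rw [← mul_assoc, ENNReal.inv_mul_cancel hρ0 hρt, one_mul]
  · intro hρ't
    set ρ' := rankRatio y x with hρ'def
    obtain ⟨r₀, hr₀mem, -⟩ := sInf_lt_iff.mp (lt_top_iff_ne_top.mpr hρ't)
    obtain ⟨-, -, hr₀⟩ := hr₀mem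
    have h1ρ' : (1 : ℝ≥0∞) ≤ ρ' := by
      apply le_sInf
      rintro r ⟨-, -, hr⟩
      calc (1 : ℝ≥0∞) = Λ₀ y := hΛ₀y.symm
      _ ≤ r * Λ₀ x := hr Λ₀ hΛ₀
      _ ≤ r * Λ₀ y := by gcongr; exact hΛ₀.mono hxy
      _ = r := by rw [hΛ₀y, mul_one]
    have hρ'0 : ρ' ≠ 0 := by
      intro h
      rw [h] at h1ρ'
      simp at h1ρ'
    have specB : ∀ Λ : S → ℝ≥0∞, IsCuFunctional Λ → Λ y ≤ ρ' * Λ x := by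
      apply rank_spec hρ'0
      intro Λ hΛ h
      have := hr₀ Λ hΛ
      rw [h, mul_zero] at this
      exact le_antisymm this (zero_le)
    exact rc_le_mul hρ'0 hρ't specB
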